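/- The topological dual of the Graev free locally convex space L_G(s) over the convergent sequence s = {1/n : n ∈ ℕ} ∪ {0} is linearly isomorphic to the space c₀ of real null sequences: a linear functional given by (y_n) ∈ ℝ^ℕ is continuous on L_G(s) if and only if y_n → 0. -/

import Mathlib

open Filter Topology

/-- `t` is a locally convex vector topology on `ℝ^(ℕ)` (the finitely supported real
sequences). -/
def IsLCVectorTopology (t : TopologicalSpace (ℕ →₀ ℝ)) : Prop :=
  @IsTopologicalAddGroup (ℕ →₀ ℝ) t _ ∧ @ContinuousSMul ℝ (ℕ →₀ ℝ) _ _ t ∧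
    @LocallyConvexSpace ℝ (ℕ →₀ ℝ) _ _ _ _ t

/-- `ν` is the finest locally convex vector topology on `ℝ^(ℕ)` in which the standard
basis vectors `e_n = single n 1` converge to `0` (this is the topology of the Graev
free locally convex space `L_G(s)`). -/
def IsNuTopology (ν : TopologicalSpace (ℕ →₀ ℝ)) : Prop :=
  IsLCVectorTopology ν ∧
  Tendsto (fun n : ℕ => Finsupp.single n (1 : ℝ)) atTop (@nhds (ℕ →₀ ℝ) ν 0) ∧
  ∀ t : TopologicalSpace (ℕ →₀ ℝ), IsLCVectorTopology t →
    Tendsto (fun n : ℕ => Finsupp.single n (1 : ℝ)) atTop (@nhds (ℕ →₀ ℝ) t 0) → ν ≤ t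

/-- the dual of the Graev free locally convex space `L_G(s)` is the space
`c₀` of real null sequences: the linear functional given by `(y_n) ∈ ℝ^ℕ` is continuous
on `(ℝ^(ℕ), ν)` if and only if `y_n → 0`. -/
theorem stmt13 (ν : TopologicalSpace (ℕ →₀ ℝ)) (hν : IsNuTopology ν) (y : ℕ → ℝ) :
    Continuous[ν, inferInstance] (fun x : ℕ →₀ ℝ => x.sum fun n c => c * y n) ↔
      Tendsto y atTop (nhds 0) := by
  obtain ⟨hlc, he, hmin⟩ := hν
  set f : (ℕ →₀ ℝ) →ₗ[ℝ] ℝ := Finsupp.linearCombination ℝ y with hf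
  have hfval : ∀ x : ℕ →₀ ℝ, f x = x.sum fun n c => c * y n := by
    intro x
    simp [hf, Finsupp.linearCombination_apply, smul_eq_mul]
  have hfe : ∀ n, f (Finsupp.single n 1) = y n := by
    intro n
    simp [hf]
  constructor
  · intro hcont
    have : Tendsto (fun n => f (Finsupp.single n (1 : ℝ))) atTop (nhds (f 0)) := by
      have hc' : Continuous[ν, inferInstance] f := by
        simpa [funext hfval] using hcont
      exact (hc'.tendsto 0).comp he
    simpa [hfe, map_zero] using this
  · intro hy
    -- induced topology
    set t : TopologicalSpace (ℕ →₀ ℝ) := TopologicalSpace.induced f inferInstance with ht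
    have hlct : IsLCVectorTopology t := by
      refine ⟨topologicalAddGroup_induced f, continuousSMul_induced (f : (ℕ →₀ ℝ) →ₗ[ℝ] ℝ), ?_⟩
      exact LocallyConvexSpace.induced f
    have het : Tendsto (fun n : ℕ => Finsupp.single n (1 : ℝ)) atTop (@nhds _ t 0) := by
      rw [ht, nhds_induced, tendsto_comap_iff]
      have : (⇑f ∘ fun n : ℕ => Finsupp.single n (1:ℝ)) = y := funext fun n => hfe n
      rw [this]
      simpa using hy
    have hle := hmin t hlct het
    have hcont_t : Continuous[t, inferInstance] f := continuous_induced_dom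
    have : Continuous[ν, inferInstance] f :=
      continuous_le_dom hle hcont_t
    simpa [funext hfval] using this
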